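/- arXiv:2004.05875 — 4 statements merged into one kernel-verified Lean document; each statement's English description precedes it below -/
import Mathlib

section
/- In the clique-reduction temporal graph, an e-vertex corresponding to edge v_i v_j of G' is unreachable from v* after a set of δ-delays of label-1 edges if and only if both edges v*v_i and v*v_j were delayed. -/
/-- `Reaches L s u t`: there is a strict temporal path from `s` to `u` in the temporal graph
with availability relation `L` (edge `u v` available at time `t`), arriving at time `t`
(`t = 0` for the trivial path). Consecutive edges use strictly increasing time labels. -/
inductive Reaches {V : Type*} (L : V → V → ℕ → Prop) (s : V) : V → ℕ → Prop
  | refl : Reaches L s s 0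
  | step {u v : V} {t t' : ℕ} : Reaches L s u t → L u v t' → t < t' → Reaches L s v t'

/-- `u` is temporally reachable from `s`. -/
def TReach {V : Type*} (L : V → V → ℕ → Prop) (s u : V) : Prop := ∃ t, Reaches L s u t


/-- Vertex set of the clique-reduction temporal graph: `none` is the source `v*`,
`some (.inl v)` is a v-vertex, `some (.inr e)` is an e-vertex. -/
abbrev W (V' : Type*) (G' : SimpleGraph V') : Type _ := Option (V' ⊕ ↥G'.edgeSet)

/-- The clique-reduction temporal graph, where the edge `v* v` has label `f v`
(so `f v = 1` means not delayed) and each edge between a v-vertex and an incident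
e-vertex has label 2. -/
def clabel {V' : Type*} (G' : SimpleGraph V') (f : V' → ℕ) :
    W V' G' → W V' G' → ℕ → Prop := fun a b t =>
  (∃ v : V', ((a = none ∧ b = some (.inl v)) ∨ (a = some (.inl v) ∧ b = none)) ∧ t = f v) ∨
  (∃ (v : V') (e : ↥G'.edgeSet), v ∈ e.val ∧
    ((a = some (.inl v) ∧ b = some (.inr e)) ∨ (a = some (.inr e) ∧ b = some (.inl v))) ∧ t = 2)


/-- In the clique-reduction temporal graph, the e-vertex of an edge `s(vi, vj)` of `G'` is
unreachable from `v*` after delaying label-1 edges iff both edges `v* vi` and `v* vj`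
were delayed. -/
theorem stmt9 {V' : Type*} [Fintype V'] [DecidableEq V'] (G' : SimpleGraph V')
    (δ : ℕ) (hδ : 1 ≤ δ) (f : V' → ℕ)
    (hf : ∀ v, f v = 1 ∨ (1 < f v ∧ f v ≤ 1 + δ))
    (e : ↥G'.edgeSet) (vi vj : V') (he : e.val = s(vi, vj)) :
    ¬ TReach (clabel G' f) none (some (.inr e)) ↔ (f vi ≠ 1 ∧ f vj ≠ 1) := by
  have hA : ∀ (v : V') (t : ℕ), Reaches (clabel G' f) none (some (.inl v)) t → t < 2 →
      f v = 1 := by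
    intro v t h ht
    cases h with
    | step h hl hlt =>
      rcases hl with ⟨w, hab, hrfl⟩ | ⟨w, e', _, hab, hrfl⟩
      · rcases hab with ⟨_, hb⟩ | ⟨_, hb⟩
        · obtain rfl : v = w := by
            simpa using hb
          rcases hf v with h1 | ⟨h1, _⟩
          · exact h1
          · omega
        · simp at hb
      · rcases hab with ⟨_, hb⟩ | ⟨_, _⟩
        · simp at hb
        · omega
  have hB : ∀ (e' : ↥G'.edgeSet) (t : ℕ), Reaches (clabel G' f) none (some (.inr e')) t →
      ∃ v, v ∈ e'.val ∧ f v = 1 := by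
    intro e' t h
    cases h with
    | step h hl hlt =>
      rcases hl with ⟨w, hab, hrfl⟩ | ⟨w, e'', hmem, hab, hrfl⟩
      · rcases hab with ⟨_, hb⟩ | ⟨_, hb⟩ <;> simp at hb
      · rcases hab with ⟨ha, hb⟩ | ⟨_, hb⟩
        · obtain rfl : e' = e'' := by
            simpa using hb
          subst ha
          exact ⟨w, hmem, hA w _ h (by omega)⟩
        · simp at hb
  constructor
  · intro hnr
    constructor <;> intro h1 <;> apply hnr
    · refine ⟨2, .step (.step .refl (Or.inl ⟨vi, Or.inl ⟨rfl, rfl⟩, rfl⟩) (by omega))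
        (Or.inr ⟨vi, e, ?_, Or.inl ⟨rfl, rfl⟩, rfl⟩) (by omega)⟩
      rw [he]; exact Sym2.mem_mk_left vi vj
    · refine ⟨2, .step (.step .refl (Or.inl ⟨vj, Or.inl ⟨rfl, rfl⟩, rfl⟩) (by omega))
        (Or.inr ⟨vj, e, ?_, Or.inl ⟨rfl, rfl⟩, rfl⟩) (by omega)⟩
      rw [he]; exact Sym2.mem_mk_right vi vj
  · rintro ⟨hi, hj⟩ ⟨t, hr⟩
    obtain ⟨v, hv, hfv⟩ := hB e t hr
    rw [he, Sym2.mem_iff] at hv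
    rcases hv with rfl | rfl
    · exact hi hfv
    · exact hj hfv
end

section
/- Delaying can speed up arrival but destroy reverse reachability: there exists a temporal graph with vertices x, y, z such that before any delay, x reaches z (earliest) at time 5 and z reaches x, while after delaying one label of the edge yz from 1 to 2, x reaches z at time 2 but x is no longer reachable from z. -/
/-- Undirected edge between `x` and `y`. -/
def und {n : ℕ} (a b x y : Fin n) : Prop := (a = x ∧ b = y) ∨ (a = y ∧ b = x)

/-- Original temporal graph: x = 0, y = 1, z = 2; edge xy has labels {1, 2},
edge yz has labels {1, 5}. -/
def Lorig : Fin 3 → Fin 3 → ℕ → Prop := fun a b t =>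
  (und a b 0 1 ∧ (t = 1 ∨ t = 2)) ∨ (und a b 1 2 ∧ (t = 1 ∨ t = 5))

/-- After delaying the label 1 of edge yz to 2: edge yz has labels {2, 5}. -/
def Ldel : Fin 3 → Fin 3 → ℕ → Prop := fun a b t =>
  (und a b 0 1 ∧ (t = 1 ∨ t = 2)) ∨ (und a b 1 2 ∧ (t = 2 ∨ t = 5))

lemma inv_orig : ∀ v t, Reaches Lorig 0 v t →
    (v = 0 ∧ (t = 0 ∨ t = 2)) ∨ (v = 1 ∧ (t = 1 ∨ t = 2)) ∨ (v = 2 ∧ t = 5) := by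
  intro v t h
  induction h with
  | refl => simp
  | step h hl hlt ih =>
    simp only [Lorig, und] at hl
    rcases ih with ⟨h0, ht⟩ | ⟨h0, ht⟩ | ⟨h0, ht⟩ <;> subst h0 <;>
      rcases hl with ⟨⟨h1, rfl⟩ | ⟨h1, rfl⟩, ht'⟩ | ⟨⟨h1, rfl⟩ | ⟨h1, rfl⟩, ht'⟩ <;>
      first
        | exact absurd h1 (by decide)
        | (simp only [Fin.isValue, true_and, and_true]; omega)
        | (exfalso; omega)

lemma inv_del : ∀ v t, Reaches Ldel 2 v t →
    (v = 2 ∧ (t = 0 ∨ t = 5)) ∨ (v = 1 ∧ (t = 2 ∨ t = 5)) := by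
  intro v t h
  induction h with
  | refl => simp
  | step h hl hlt ih =>
    simp only [Ldel, und] at hl
    rcases ih with ⟨h0, ht⟩ | ⟨h0, ht⟩ <;> subst h0 <;>
      rcases hl with ⟨⟨h1, rfl⟩ | ⟨h1, rfl⟩, ht'⟩ | ⟨⟨h1, rfl⟩ | ⟨h1, rfl⟩, ht'⟩ <;>
      first
        | exact absurd h1 (by decide)
        | (simp only [Fin.isValue, true_and, and_true]; omega)
        | (exfalso; omega)

/-- Delaying can speed up arrival but destroy reverse reachability: before the delay,
x reaches z earliest at time 5 and z reaches x; after delaying one label 1 of edge yz to 2,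
x reaches z at time 2 but x is no longer reachable from z. -/
theorem stmt11 :
    (∀ a b t, Lorig a b t → Lorig b a t) ∧
    Lorig 1 2 1 ∧
    (∀ a b t, Ldel a b t ↔ (Lorig a b t ∧ ¬(und a b 1 2 ∧ t = 1)) ∨ (und a b 1 2 ∧ t = 2)) ∧
    Reaches Lorig 0 2 5 ∧ (∀ t, Reaches Lorig 0 2 t → 5 ≤ t) ∧
    TReach Lorig 2 0 ∧
    Reaches Ldel 0 2 2 ∧
    ¬ TReach Ldel 2 0 := by
  have h1 : Reaches Lorig (0 : Fin 3) 1 1 := .step .refl (by simp [Lorig, und]) (by norm_num)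
  have h2 : Reaches Lorig (0 : Fin 3) 2 5 := .step h1 (by simp [Lorig, und]) (by norm_num)
  have g1 : Reaches Lorig (2 : Fin 3) 1 1 := .step .refl (by simp [Lorig, und]) (by norm_num)
  have g2 : Reaches Lorig (2 : Fin 3) 0 2 := .step g1 (by simp [Lorig, und]) (by norm_num)
  have d1 : Reaches Ldel (0 : Fin 3) 1 1 := .step .refl (by simp [Ldel, und]) (by norm_num)
  have d2 : Reaches Ldel (0 : Fin 3) 2 2 := .step d1 (by simp [Ldel, und]) (by norm_num)
  refine ⟨?_, ?_, ?_, h2, ?_, ⟨2, g2⟩, d2, ?_⟩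
  · intro a b t h
    simp only [Lorig, und] at h ⊢
    tauto
  · simp [Lorig, und]
  · intro a b t
    simp only [Lorig, Ldel, und]
    fin_cases a <;> fin_cases b <;> (try simp [Fin.ext_iff]) <;> omega
  · intro t h
    rcases inv_orig 2 t h with ⟨hh, _⟩ | ⟨hh, _⟩ | ⟨_, rfl⟩ <;> first | exact absurd hh (by decide) | omega
  · rintro ⟨t, h⟩
    rcases inv_del 0 t h with ⟨hh, _⟩ | ⟨hh, _⟩ <;> exact absurd hh (by decide)
end

section
/- On a temporal path graph v1, v2, ..., vn where edge v_i v_{i+1} has exactly the label i for each i, every vertex is reachable from v1 via a strict temporal path, and after a 2-merge of E_j and E_{j+1} (for any 1 ≤ j < n−1), exactly the vertices v1, ..., v_{j+1} are reachable from v1. -/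
/-- The temporal path graph on vertices `v₁, …, vₙ` (0-indexed: `0, …, n-1`), where the edge
between `v_i` and `v_{i+1}` (indices `i-1` and `i`) has exactly the label `i`. -/
def pathL (n : ℕ) : Fin n → Fin n → ℕ → Prop := fun a b t =>
  (a.val + 1 = b.val ∧ t = a.val + 1) ∨ (b.val + 1 = a.val ∧ t = b.val + 1)

/-- A 2-merge of the edge-sets with labels `t₁` and `t₂ = t₁ + 1`: every edge with label `t₁`
gets label `t₂` instead. -/
def mergeL {V : Type*} (L : V → V → ℕ → Prop) (t₁ t₂ : ℕ) : V → V → ℕ → Prop :=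
  fun a b t => (L a b t ∧ t ≠ t₁) ∨ (L a b t₁ ∧ t = t₂)

lemma pathReach (n : ℕ) (hn : 0 < n) :
    ∀ k (hk : k < n), Reaches (pathL n) ⟨0, hn⟩ ⟨k, hk⟩ k := by
  intro k
  induction k with
  | zero => intro hk; exact Reaches.refl
  | succ m ih =>
    intro hk
    exact Reaches.step (ih (by omega)) (Or.inl ⟨rfl, rfl⟩) (by omega)

lemma mergeReach (n j : ℕ) (hn : 0 < n) :
    ∀ k, k < j → ∀ (hk : k < n),
      Reaches (mergeL (pathL n) j (j + 1)) ⟨0, hn⟩ ⟨k, hk⟩ k := by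
  intro k
  induction k with
  | zero => intro _ hk; exact Reaches.refl
  | succ m ih =>
    intro hkj hk
    exact Reaches.step (ih (by omega) (by omega))
      (Or.inl ⟨Or.inl ⟨rfl, rfl⟩, by omega⟩) (by omega)

lemma mergeInv (n j : ℕ) (hj : 1 ≤ j) (hn : 0 < n) :
    ∀ v t, Reaches (mergeL (pathL n) j (j + 1)) ⟨0, hn⟩ v t →
      (v.val < j ∧ t = v.val) ∨ (v.val = j ∧ t = j + 1) := by
  intro v t h
  induction h with
  | refl => left; exact ⟨hj, rfl⟩
  | step _ e ht ih =>
    rcases e with ⟨e, hne⟩ | ⟨e, rfl⟩ <;> rcases e with ⟨h1, h2⟩ | ⟨h1, h2⟩ <;> omega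

/-- On the temporal path graph every vertex is reachable from `v₁`, and after the 2-merge of
`E_j` and `E_{j+1}` (`1 ≤ j < n - 1`) exactly `v₁, …, v_{j+1}` are reachable from `v₁`. -/
theorem stmt13 (n j : ℕ) (hj : 1 ≤ j) (hjn : j < n - 1) :
    (∀ v : Fin n, TReach (pathL n) ⟨0, by omega⟩ v) ∧
    (∀ v : Fin n, TReach (mergeL (pathL n) j (j + 1)) ⟨0, by omega⟩ v ↔ v.val ≤ j) := by
  have hn : 0 < n := by omega
  constructor
  · intro v
    exact ⟨v.val, by convert pathReach n hn v.val v.isLt using 2⟩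
  · intro v
    constructor
    · rintro ⟨t, h⟩
      rcases mergeInv n j hj hn v t h with ⟨h1, _⟩ | ⟨h1, _⟩ <;> omega
    · intro hv
      rcases lt_or_eq_of_le hv with hlt | heq
      · exact ⟨v.val, by convert mergeReach n j hn v.val hlt v.isLt using 2⟩
      · refine ⟨j + 1, Reaches.step (mergeReach n j hn (j - 1) (by omega) (by omega))
          (Or.inr ⟨Or.inl ⟨show j - 1 + 1 = v.val by omega, show j = j - 1 + 1 by omega⟩, rfl⟩) (by omega)⟩
end

section
/- In the gadget path c_k — y^l (label 4k), y^l — z^l (label 4k+1), c_k — y^r (label 4k+1), y^r — z^r (label 4k+2): merging labels 4k and 4k+1 (all edges with label 4k become available at 4k+1) makes z^l unreachable from c_k while y^l, y^r, z^r remain reachable; symmetrically, merging 4k+1 with 4k+2 makes z^r unreachable while y^l, z^l, y^r remain reachable from c_k. -/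
/-- The clause gadget: vertices c = 0, yˡ = 1, zˡ = 2, yʳ = 3, zʳ = 4, with edges
c–yˡ (label 4k), yˡ–zˡ (label 4k+1), c–yʳ (label 4k+1), yʳ–zʳ (label 4k+2). -/
def gadget (k : ℕ) : Fin 5 → Fin 5 → ℕ → Prop := fun a b t =>
  (und a b 0 1 ∧ t = 4 * k) ∨ (und a b 1 2 ∧ t = 4 * k + 1) ∨
  (und a b 0 3 ∧ t = 4 * k + 1) ∨ (und a b 3 4 ∧ t = 4 * k + 2)

lemma inv1 (k : ℕ) {v : Fin 5} {t : ℕ}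
    (h : Reaches (mergeL (gadget k) (4 * k) (4 * k + 1)) 0 v t) :
    (v = 0 ∧ t = 0) ∨ (v = 1 ∧ t = 4 * k + 1) ∨ (v = 3 ∧ t = 4 * k + 1) ∨
    (v = 4 ∧ t = 4 * k + 2) := by
  induction h with
  | refl => exact Or.inl ⟨rfl, rfl⟩
  | step h hL hlt ih =>
    rcases hL with ⟨hg, hne⟩ | ⟨hg, ht'⟩ <;>
    rcases hg with ⟨hu, ht⟩ | ⟨hu, ht⟩ | ⟨hu, ht⟩ | ⟨hu, ht⟩ <;>
    rcases hu with ⟨h1, h2⟩ | ⟨h1, h2⟩ <;>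
    rcases ih with ⟨h3, h4⟩ | ⟨h3, h4⟩ | ⟨h3, h4⟩ | ⟨h3, h4⟩ <;>
    subst_vars <;> simp_all

lemma inv2 (k : ℕ) {v : Fin 5} {t : ℕ}
    (h : Reaches (mergeL (gadget k) (4 * k + 1) (4 * k + 2)) 0 v t) :
    (v = 0 ∧ t = 0) ∨ (v = 1 ∧ t = 4 * k) ∨ (v = 2 ∧ t = 4 * k + 2) ∨
    (v = 3 ∧ t = 4 * k + 2) := by
  induction h with
  | refl => exact Or.inl ⟨rfl, rfl⟩
  | step h hL hlt ih =>
    rcases hL with ⟨hg, hne⟩ | ⟨hg, ht'⟩ <;>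
    rcases hg with ⟨hu, ht⟩ | ⟨hu, ht⟩ | ⟨hu, ht⟩ | ⟨hu, ht⟩ <;>
    rcases hu with ⟨h1, h2⟩ | ⟨h1, h2⟩ <;>
    rcases ih with ⟨h3, h4⟩ | ⟨h3, h4⟩ | ⟨h3, h4⟩ | ⟨h3, h4⟩ <;>
    subst_vars <;> simp_all

/-- Merging 4k with 4k+1 makes zˡ unreachable from c while yˡ, yʳ, zʳ remain reachable;
merging 4k+1 with 4k+2 makes zʳ unreachable while yˡ, zˡ, yʳ remain reachable. -/
theorem stmt16 (k : ℕ) (hk : 1 ≤ k) :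
    (¬ TReach (mergeL (gadget k) (4 * k) (4 * k + 1)) 0 2 ∧
      TReach (mergeL (gadget k) (4 * k) (4 * k + 1)) 0 1 ∧
      TReach (mergeL (gadget k) (4 * k) (4 * k + 1)) 0 3 ∧
      TReach (mergeL (gadget k) (4 * k) (4 * k + 1)) 0 4) ∧
    (¬ TReach (mergeL (gadget k) (4 * k + 1) (4 * k + 2)) 0 4 ∧
      TReach (mergeL (gadget k) (4 * k + 1) (4 * k + 2)) 0 1 ∧
      TReach (mergeL (gadget k) (4 * k + 1) (4 * k + 2)) 0 2 ∧
      TReach (mergeL (gadget k) (4 * k + 1) (4 * k + 2)) 0 3) := by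
  have e01 : Reaches (mergeL (gadget k) (4 * k) (4 * k + 1)) 0 1 (4 * k + 1) :=
    .step .refl (Or.inr ⟨Or.inl ⟨Or.inl ⟨rfl, rfl⟩, rfl⟩, rfl⟩) (by omega)
  have e03 : Reaches (mergeL (gadget k) (4 * k) (4 * k + 1)) 0 3 (4 * k + 1) :=
    .step .refl (Or.inl ⟨Or.inr (Or.inr (Or.inl ⟨Or.inl ⟨rfl, rfl⟩, rfl⟩)), by omega⟩)
      (by omega)
  have e34 : Reaches (mergeL (gadget k) (4 * k) (4 * k + 1)) 0 4 (4 * k + 2) :=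
    .step e03 (Or.inl ⟨Or.inr (Or.inr (Or.inr ⟨Or.inl ⟨rfl, rfl⟩, rfl⟩)), by omega⟩)
      (by omega)
  have f01 : Reaches (mergeL (gadget k) (4 * k + 1) (4 * k + 2)) 0 1 (4 * k) :=
    .step .refl (Or.inl ⟨Or.inl ⟨Or.inl ⟨rfl, rfl⟩, rfl⟩, by omega⟩) (by omega)
  have f12 : Reaches (mergeL (gadget k) (4 * k + 1) (4 * k + 2)) 0 2 (4 * k + 2) :=
    .step f01 (Or.inr ⟨Or.inr (Or.inl ⟨Or.inl ⟨rfl, rfl⟩, rfl⟩), rfl⟩) (by omega)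
  have f03 : Reaches (mergeL (gadget k) (4 * k + 1) (4 * k + 2)) 0 3 (4 * k + 2) :=
    .step .refl (Or.inr ⟨Or.inr (Or.inr (Or.inl ⟨Or.inl ⟨rfl, rfl⟩, rfl⟩)), rfl⟩)
      (by omega)
  refine ⟨⟨?_, ⟨_, e01⟩, ⟨_, e03⟩, ⟨_, e34⟩⟩, ?_, ⟨_, f01⟩, ⟨_, f12⟩, ⟨_, f03⟩⟩
  · rintro ⟨t, h⟩
    rcases inv1 k h with ⟨h1, _⟩ | ⟨h1, _⟩ | ⟨h1, _⟩ | ⟨h1, _⟩ <;> simp_all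
  · rintro ⟨t, h⟩
    rcases inv2 k h with ⟨h1, _⟩ | ⟨h1, _⟩ | ⟨h1, _⟩ | ⟨h1, _⟩ <;> simp_all
end
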